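/- Let L : ℝ^d → ℝ^𝒴 be a polyhedral loss that embeds a discrete loss ℓ : ℛ → ℝ^𝒴. Then there exists a link function ψ : ℝ^d → ℛ such that for every p ∈ Δ_𝒴 there exists δ > 0 such that for all u ∈ ℝ^d: ⟨p, L(u)⟩ − inf_{u'∈ℝ^d} ⟨p, L(u')⟩ ≥ δ · (⟨p, ℓ(ψ(u))⟩ − min_{r∈ℛ} ⟨p, ℓ(r)⟩). -/

import Mathlib

/-- The probability simplex over a finite outcome set `Y`. -/
def probSimplex (Y : Type*) [Fintype Y] : Set (Y → ℝ) :=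
  {p | (∀ y, 0 ≤ p y) ∧ ∑ y, p y = 1}

/-- Expected loss `⟨p, v⟩ = ∑ y, p y * v y`. -/
def elloss {Y : Type*} [Fintype Y] (p : Y → ℝ) (v : Y → ℝ) : ℝ :=
  ∑ y, p y * v y

/-- `u` minimizes the expected loss `⟨p, L ·⟩` over the report set. -/
def Minimizes {U Y : Type*} [Fintype Y] (p : Y → ℝ) (L : U → Y → ℝ) (u : U) : Prop :=
  ∀ u' : U, elloss p (L u) ≤ elloss p (L u')

/-- The Bayes risk `inf_u ⟨p, L u⟩`. -/
noncomputable def bayesRisk {U Y : Type*} [Fintype Y] (p : Y → ℝ) (L : U → Y → ℝ) : ℝ :=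
  sInf (Set.range fun u => elloss p (L u))

/-- `L` embeds the discrete loss `ℓ`. -/
def Embeds {R Y : Type*} [Fintype Y] {d : ℕ}
    (L : (Fin d → ℝ) → Y → ℝ) (ℓ : R → Y → ℝ) : Prop :=
  ∃ φ : R → (Fin d → ℝ), Function.Injective φ ∧ (∀ r, L (φ r) = ℓ r) ∧
    ∀ p ∈ probSimplex Y, ∀ r, Minimizes p ℓ r ↔ Minimizes p L (φ r)

/-- A polyhedral convex function: a pointwise maximum of finitely many affine functions. -/
def IsPolyhedralFn {d : ℕ} (g : (Fin d → ℝ) → ℝ) : Prop :=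
  ∃ (m : ℕ) (a : Fin (m + 1) → Fin d → ℝ) (b : Fin (m + 1) → ℝ),
    ∀ x, g x = Finset.univ.sup' Finset.univ_nonempty (fun i => ∑ j, a i j * x j + b i)


open Finset
set_option linter.unusedSectionVars false
set_option maxHeartbeats 1000000
noncomputable section
open scoped Classical

def SolS {d : ℕ} {J : Type*} [Fintype J] (A : J → Fin d → ℝ) (β w : J → ℝ) (c : ℝ) :
    Set (Fin d → ℝ) := {x | ∀ j, ∑ i, A j i * x i ≤ β j + c * w j}

variable {d : ℕ} {J : Type*} [Fintype J]

def DerIdx (A : J → Fin (d+1) → ℝ) : Type _ :=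
  {j : J // A j (Fin.last d) = 0} ⊕ ({j : J // 0 < A j (Fin.last d)} × {k : J // A k (Fin.last d) < 0})

instance (A : J → Fin (d+1) → ℝ) : Fintype (DerIdx A) := by
  unfold DerIdx; infer_instance

def A0 (A : J → Fin (d+1) → ℝ) (j : J) : Fin d → ℝ := fun i => A j i.castSucc

def derA (A : J → Fin (d+1) → ℝ) : DerIdx A → Fin d → ℝ :=
  Sum.elim (fun j => A0 A j.1)
    (fun jk => fun i => A jk.1.1 (Fin.last d) * A0 A jk.2.1 i + (- A jk.2.1 (Fin.last d)) * A0 A jk.1.1 i)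

def derβ (A : J → Fin (d+1) → ℝ) (β : J → ℝ) : DerIdx A → ℝ :=
  Sum.elim (fun j => β j.1)
    (fun jk => A jk.1.1 (Fin.last d) * β jk.2.1 + (- A jk.2.1 (Fin.last d)) * β jk.1.1)

def derw (A : J → Fin (d+1) → ℝ) (w : J → ℝ) : DerIdx A → ℝ :=
  Sum.elim (fun j => w j.1)
    (fun jk => A jk.1.1 (Fin.last d) * w jk.2.1 + (- A jk.2.1 (Fin.last d)) * w jk.1.1)

lemma sum_split (A : J → Fin (d+1) → ℝ) (j : J) (x : Fin (d+1) → ℝ) :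
    ∑ i, A j i * x i = (∑ i, A0 A j i * Fin.init x i) + A j (Fin.last d) * x (Fin.last d) := by
  rw [Fin.sum_univ_castSucc]; rfl

lemma SolS_mono {A : J → Fin d → ℝ} {β w : J → ℝ}
    {c c' : ℝ} (hw : ∀ j, 0 < w j) (hcc : c ≤ c') :
    SolS A β w c ⊆ SolS A β w c' := by
  intro x hx j
  have := hx j
  nlinarith [hw j]

lemma derw_pos {A : J → Fin (d+1) → ℝ} {w : J → ℝ} (hw : ∀ j, 0 < w j) :
    ∀ j, 0 < derw A w j := by
  rintro (j | jk)
  · exact hw j.1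
  · have h1 := jk.1.2
    have h2 := jk.2.2
    have := hw jk.1.1
    have := hw jk.2.1
    simp only [derw, Sum.elim_inr]
    nlinarith

lemma der_easy {A : J → Fin (d+1) → ℝ} {β w : J → ℝ} {c : ℝ} {x : Fin (d+1) → ℝ}
    (hx : x ∈ SolS A β w c) : Fin.init x ∈ SolS (derA A) (derβ A β) (derw A w) c := by
  rintro (j | ⟨⟨j, hj⟩, ⟨k, hk⟩⟩)
  · have := hx j.1
    rw [sum_split] at this
    have hα := j.2
    simp only [derA, derβ, derw, Sum.elim_inl]
    rw [hα] at this
    linarith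
  · have hxj := hx j
    have hxk := hx k
    rw [sum_split] at hxj hxk
    simp only [derA, derβ, derw, Sum.elim_inr]
    have expand : ∑ i, (A j (Fin.last d) * A0 A k i + (- A k (Fin.last d)) * A0 A j i) * Fin.init x i
        = A j (Fin.last d) * (∑ i, A0 A k i * Fin.init x i)
          + (- A k (Fin.last d)) * (∑ i, A0 A j i * Fin.init x i) := by
      rw [Finset.mul_sum, Finset.mul_sum, ← Finset.sum_add_distrib]
      congr 1; ext i; ring
    rw [expand]
    nlinarith [mul_le_mul_of_nonneg_left hxk (le_of_lt hj),
      mul_le_mul_of_nonneg_left hxj (by linarith : (0:ℝ) ≤ - A k (Fin.last d))]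

/-- Lower bound for the last variable coming from a row with negative last coefficient. -/
def loVal (A : J → Fin (d+1) → ℝ) (β : J → ℝ) (k : J) (y : Fin d → ℝ) : ℝ :=
  ((∑ i, A0 A k i * y i) - β k) / (- A k (Fin.last d))

/-- Upper bound for the last variable coming from a row with positive last coefficient. -/
def hiVal (A : J → Fin (d+1) → ℝ) (β : J → ℝ) (j : J) (y : Fin d → ℝ) : ℝ :=
  (β j - (∑ i, A0 A j i * y i)) / (A j (Fin.last d))

lemma lo_le_hi {A : J → Fin (d+1) → ℝ} {β w : J → ℝ} {y : Fin d → ℝ}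
    (hy : y ∈ SolS (derA A) (derβ A β) (derw A w) 0)
    {j k : J} (hj : 0 < A j (Fin.last d)) (hk : A k (Fin.last d) < 0) :
    loVal A β k y ≤ hiVal A β j y := by
  have h := hy (Sum.inr ⟨⟨j, hj⟩, ⟨k, hk⟩⟩)
  simp only [derA, derβ, derw, Sum.elim_inr, zero_mul, add_zero] at h
  have expand : ∑ i, (A j (Fin.last d) * A0 A k i + (- A k (Fin.last d)) * A0 A j i) * y i
      = A j (Fin.last d) * (∑ i, A0 A k i * y i)
        + (- A k (Fin.last d)) * (∑ i, A0 A j i * y i) := by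
    rw [Finset.mul_sum, Finset.mul_sum, ← Finset.sum_add_distrib]
    congr 1; ext i; ring
  rw [expand] at h
  rw [loVal, hiVal, div_le_div_iff₀ (by linarith) hj]
  nlinarith

/-- Key lift lemma: a solution of the derived system lifts to a solution of the original
system, with the last coordinate as close to a target `ξ` as the bounds allow. -/
lemma lift_core {A : J → Fin (d+1) → ℝ} {β w : J → ℝ} {y' : Fin d → ℝ}
    (hy' : y' ∈ SolS (derA A) (derβ A β) (derw A w) 0) (ξ : ℝ) :
    ∃ yd : ℝ, Fin.snoc y' yd ∈ SolS A β w 0 ∧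
      (yd = ξ ∨
       (∃ k, A k (Fin.last d) < 0 ∧ yd = loVal A β k y' ∧ ξ ≤ yd) ∨
       (∃ j, 0 < A j (Fin.last d) ∧ yd = hiVal A β j y' ∧ yd ≤ ξ)) := by
  set Kneg : Finset J := univ.filter (fun k => A k (Fin.last d) < 0) with hKneg
  set Jpos : Finset J := univ.filter (fun j => 0 < A j (Fin.last d)) with hJpos
  set B : ℝ := if h : Jpos.Nonempty then min ξ (Jpos.inf' h (fun j => hiVal A β j y')) else ξ with hB
  set yd : ℝ := if h : Kneg.Nonempty then max (Kneg.sup' h (fun k => loVal A β k y')) B else B with hyd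
  have hBle : B ≤ ξ := by
    rw [hB]; split
    · exact min_le_left _ _
    · exact le_rfl
  have hBhi : ∀ j ∈ Jpos, B ≤ hiVal A β j y' := by
    intro j hj
    rw [hB]
    split
    · exact le_trans (min_le_right _ _) (Finset.inf'_le _ hj)
    · exact absurd (⟨j, hj⟩ : Jpos.Nonempty) (by assumption)
  have hsuphi : ∀ h : Kneg.Nonempty, ∀ j ∈ Jpos,
      Kneg.sup' h (fun k => loVal A β k y') ≤ hiVal A β j y' := by
    intro h j hj
    apply Finset.sup'_le
    intro k hk
    exact lo_le_hi hy' (by simpa [hJpos] using hj) (by simpa [hKneg] using hk)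
  have hydhi : ∀ j ∈ Jpos, yd ≤ hiVal A β j y' := by
    intro j hj
    rw [hyd]; split
    · exact max_le (hsuphi _ j hj) (hBhi j hj)
    · exact hBhi j hj
  have hydlo : ∀ k ∈ Kneg, loVal A β k y' ≤ yd := by
    intro k hk
    rw [hyd]
    split
    · exact le_trans (Finset.le_sup' (fun k => loVal A β k y') hk) (le_max_left _ _)
    · exact absurd (⟨k, hk⟩ : Kneg.Nonempty) (by assumption)
  have hydB : B ≤ yd := by
    rw [hyd]; split
    · exact le_max_right _ _
    · exact le_rfl
  have hyd_eq : yd = B ∨ ∃ h : Kneg.Nonempty, yd = Kneg.sup' h (fun k => loVal A β k y') := by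
    rw [hyd]; split
    · rcases max_cases (Kneg.sup' (by assumption) (fun k => loVal A β k y')) B with ⟨heq, _⟩ | ⟨heq, _⟩
      · exact Or.inr ⟨by assumption, heq⟩
      · exact Or.inl heq
    · exact Or.inl rfl
  have hB_eq : B = ξ ∨ ∃ h : Jpos.Nonempty, B = Jpos.inf' h (fun j => hiVal A β j y') := by
    rw [hB]; split
    · rcases min_cases ξ (Jpos.inf' (by assumption) (fun j => hiVal A β j y')) with ⟨heq, _⟩ | ⟨heq, _⟩
      · exact Or.inl heq
      · exact Or.inr ⟨by assumption, heq⟩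
    · exact Or.inl rfl
  refine ⟨yd, ?_, ?_⟩
  · intro j
    rw [sum_split, Fin.init_snoc, Fin.snoc_last]
    rcases lt_trichotomy (A j (Fin.last d)) 0 with hα | hα | hα
    · have := hydlo j (by simp [hKneg, hα])
      rw [loVal, div_le_iff₀ (by linarith : (0:ℝ) < - A j (Fin.last d))] at this
      nlinarith
    · have h := hy' (Sum.inl ⟨j, hα⟩)
      simp only [derA, derβ, derw, Sum.elim_inl, zero_mul, add_zero] at h
      rw [hα]
      simpa using h
    · have := hydhi j (by simp [hJpos, hα])
      rw [hiVal, le_div_iff₀ hα] at this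
      nlinarith
  · rcases lt_trichotomy yd ξ with hlt | heq | hgt
    · -- yd < ξ : tag 3
      right; right
      have hBinf : ∃ h : Jpos.Nonempty, B = Jpos.inf' h (fun j => hiVal A β j y') := by
        rcases hB_eq with hBx | hBi
        · exfalso
          rcases hyd_eq with hydB' | ⟨hK, hydS⟩
          · rw [hydB', hBx] at hlt; exact lt_irrefl _ hlt
          · rw [hBx] at hydB; linarith
        · exact hBi
      obtain ⟨hJne, hBi⟩ := hBinf
      obtain ⟨j, hjm, hje⟩ := Finset.exists_mem_eq_inf' hJne (fun j => hiVal A β j y')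
      rcases hyd_eq with hydB' | ⟨hK, hydS⟩
      · exact ⟨j, by simpa [hJpos] using hjm, by rw [hydB', hBi, hje], le_of_lt hlt⟩
      · -- yd = sup' lo, and B = inf' hi ≤ sup' lo ≤ inf' hi so all equal
        have h1 : Jpos.inf' hJne (fun j => hiVal A β j y') ≤ Kneg.sup' hK (fun k => loVal A β k y') := by
          rw [← hBi, ← hydS]; exact hydB
        have h2 : Kneg.sup' hK (fun k => loVal A β k y') ≤ Jpos.inf' hJne (fun j => hiVal A β j y') := by
          apply Finset.le_inf'
          intro b hb
          exact hsuphi hK b hb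
        have : yd = hiVal A β j y' := by
          rw [hydS]; rw [← hje]; linarith
        exact ⟨j, by simpa [hJpos] using hjm, this, le_of_lt hlt⟩
    · exact Or.inl heq
    · -- ξ < yd : tag 2
      right; left
      rcases hyd_eq with hydB' | ⟨hK, hydS⟩
      · exfalso; rw [hydB'] at hgt; linarith
      · obtain ⟨k, hk, hks⟩ := Finset.exists_mem_eq_sup' hK (fun k => loVal A β k y')
        exact ⟨k, by simpa [hKneg] using hk, by rw [hydS, hks], le_of_lt hgt⟩


lemma sum_diff_bound {v : Fin d → ℝ} {y z : Fin d → ℝ} {ε' : ℝ}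
    (hyz : ∀ i, |y i - z i| ≤ ε') :
    |(∑ i, v i * y i) - ∑ i, v i * z i| ≤ (∑ i, |v i|) * ε' := by
  rw [← Finset.sum_sub_distrib]
  refine le_trans (Finset.abs_sum_le_sum_abs _ _) ?_
  rw [Finset.sum_mul]
  apply Finset.sum_le_sum
  intro i _
  have : v i * y i - v i * z i = v i * (y i - z i) := by ring
  rw [this, abs_mul]
  exact mul_le_mul_of_nonneg_left (hyz i) (abs_nonneg _)

lemma loVal_diff_le {A : J → Fin (d+1) → ℝ} {β : J → ℝ} {k : J}
    (hk : A k (Fin.last d) < 0) {y z : Fin d → ℝ} {ε' : ℝ}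
    (hyz : ∀ i, |y i - z i| ≤ ε') :
    |loVal A β k y - loVal A β k z| ≤ (∑ i, |A0 A k i|) / |A k (Fin.last d)| * ε' := by
  have hαpos : (0:ℝ) < - A k (Fin.last d) := by linarith
  have habs : |A k (Fin.last d)| = - A k (Fin.last d) := abs_of_neg hk
  have : loVal A β k y - loVal A β k z
      = ((∑ i, A0 A k i * y i) - ∑ i, A0 A k i * z i) / (- A k (Fin.last d)) := by
    rw [loVal, loVal]; ring
  rw [this, abs_div, abs_of_pos hαpos, habs, div_mul_eq_mul_div, div_le_div_iff₀ hαpos hαpos]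
  have := sum_diff_bound (v := A0 A k) hyz
  nlinarith

lemma hiVal_diff_le {A : J → Fin (d+1) → ℝ} {β : J → ℝ} {j : J}
    (hj : 0 < A j (Fin.last d)) {y z : Fin d → ℝ} {ε' : ℝ}
    (hyz : ∀ i, |y i - z i| ≤ ε') :
    |hiVal A β j y - hiVal A β j z| ≤ (∑ i, |A0 A j i|) / |A j (Fin.last d)| * ε' := by
  have habs : |A j (Fin.last d)| = A j (Fin.last d) := abs_of_pos hj
  have : hiVal A β j y - hiVal A β j z
      = ((∑ i, A0 A j i * z i) - ∑ i, A0 A j i * y i) / (A j (Fin.last d)) := by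
    rw [hiVal, hiVal]; ring
  rw [this, abs_div, abs_of_pos hj, div_mul_eq_mul_div, div_le_div_iff₀ hj hj]
  have := sum_diff_bound (v := A0 A j) (y := z) (z := y)
    (fun i => by rw [abs_sub_comm]; exact hyz i)
  nlinarith

lemma loVal_le_row {A : J → Fin (d+1) → ℝ} {β w : J → ℝ} {c : ℝ} {x : Fin (d+1) → ℝ}
    (hx : x ∈ SolS A β w c) {k : J} (hk : A k (Fin.last d) < 0) :
    loVal A β k (Fin.init x) ≤ x (Fin.last d) + c * (w k / |A k (Fin.last d)|) := by
  have hαpos : (0:ℝ) < - A k (Fin.last d) := by linarith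
  have habs : |A k (Fin.last d)| = - A k (Fin.last d) := abs_of_neg hk
  have hrow := hx k
  rw [sum_split] at hrow
  rw [loVal, habs, div_le_iff₀ hαpos, add_mul, mul_assoc,
    div_mul_cancel₀ _ (ne_of_gt hαpos)]
  ring_nf at hrow ⊢
  linarith

lemma row_le_hiVal {A : J → Fin (d+1) → ℝ} {β w : J → ℝ} {c : ℝ} {x : Fin (d+1) → ℝ}
    (hx : x ∈ SolS A β w c) {j : J} (hj : 0 < A j (Fin.last d)) :
    x (Fin.last d) ≤ hiVal A β j (Fin.init x) + c * (w j / |A j (Fin.last d)|) := by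
  have habs : |A j (Fin.last d)| = A j (Fin.last d) := abs_of_pos hj
  have hrow := hx j
  rw [sum_split] at hrow
  have hc2 : c * (w j / A j (Fin.last d)) = (c * w j) / A j (Fin.last d) := by ring
  rw [hiVal, habs, hc2, ← add_div, le_div_iff₀ hj]
  ring_nf at hrow ⊢
  linarith

theorem Emain : ∀ (d : ℕ) {J : Type u} [Fintype J] (A : J → Fin d → ℝ) (β w : J → ℝ),
    (∀ j, 0 < w j) → (∀ ε : ℝ, 0 < ε → (SolS A β w ε).Nonempty) →
    (SolS A β w 0).Nonempty := by
  intro d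
  induction d with
  | zero =>
    intro J _ A β w hw hfeas
    refine ⟨fun i => i.elim0, ?_⟩
    intro j
    have hβ : 0 ≤ β j := by
      by_contra hc
      push_neg at hc
      obtain ⟨x, hx⟩ := hfeas (-β j / (2 * w j)) (div_pos (by linarith) (by linarith [hw j]))
      have hr := hx j
      simp only [Finset.univ_eq_empty, Finset.sum_empty] at hr
      have hwne : w j ≠ 0 := ne_of_gt (hw j)
      have : -β j / (2 * w j) * w j = -β j / 2 := by
        field_simp
      rw [this] at hr
      linarith
    simp only [SolS, Set.mem_setOf_eq, Finset.univ_eq_empty, Finset.sum_empty, zero_mul]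
    linarith
  | succ d IH =>
    intro J _ A β w hw hfeas
    have hfeas' : ∀ ε : ℝ, 0 < ε → (SolS (derA A) (derβ A β) (derw A w) ε).Nonempty := by
      intro ε hε
      obtain ⟨x, hx⟩ := hfeas ε hε
      exact ⟨Fin.init x, der_easy hx⟩
    obtain ⟨y', hy'⟩ := IH _ _ _ (derw_pos hw) hfeas'
    obtain ⟨yd, hmem, -⟩ := lift_core hy' 0
    exact ⟨_, hmem⟩

theorem Fmain : ∀ (d : ℕ) {J : Type u} [Fintype J] (A : J → Fin d → ℝ) (β w : J → ℝ),
    (∀ j, 0 < w j) → (SolS A β w 0).Nonempty → ∀ ε : ℝ, 0 < ε →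
    ∃ c : ℝ, 0 < c ∧ ∀ x ∈ SolS A β w c, ∃ y ∈ SolS A β w 0, ∀ i, |x i - y i| ≤ ε := by
  intro d
  induction d with
  | zero =>
    intro J _ A β w hw hne ε hε
    obtain ⟨y0, hy0⟩ := hne
    exact ⟨1, one_pos, fun x _ => ⟨y0, hy0, fun i => i.elim0⟩⟩
  | succ d IH =>
    intro J _ A β w hw hne ε hε
    set K : ℝ := ∑ j : J, (if A j (Fin.last d) ≠ 0 then (∑ i, |A0 A j i|) / |A j (Fin.last d)| else 0) with hK
    set W : ℝ := ∑ j : J, (if A j (Fin.last d) ≠ 0 then w j / |A j (Fin.last d)| else 0) with hW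
    have hK0 : 0 ≤ K := by
      apply Finset.sum_nonneg
      intro j _
      split
      · positivity
      · exact le_rfl
    have hW0 : 0 ≤ W := by
      apply Finset.sum_nonneg
      intro j _
      split
      · have := hw j; positivity
      · exact le_rfl
    have hKterm : ∀ k : J, A k (Fin.last d) ≠ 0 → (∑ i, |A0 A k i|) / |A k (Fin.last d)| ≤ K := by
      intro k hk
      rw [hK]
      refine le_trans ?_ (Finset.single_le_sum
        (f := fun j => (if A j (Fin.last d) ≠ 0 then (∑ i, |A0 A j i|) / |A j (Fin.last d)| else 0))
        (fun j _ => by split <;> positivity) (Finset.mem_univ k))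
      rw [if_pos hk]
    have hWterm : ∀ k : J, A k (Fin.last d) ≠ 0 → w k / |A k (Fin.last d)| ≤ W := by
      intro k hk
      rw [hW]
      refine le_trans ?_ (Finset.single_le_sum
        (f := fun j => (if A j (Fin.last d) ≠ 0 then w j / |A j (Fin.last d)| else 0))
        (fun j _ => by have := hw j; split <;> positivity) (Finset.mem_univ k))
      rw [if_pos hk]
    set ε' : ℝ := min ε (ε / (2 * (K + 1))) with hε'def
    have hε'pos : 0 < ε' := lt_min hε (by positivity)
    have hε'le : ε' ≤ ε := min_le_left _ _
    obtain ⟨x₀, hx₀⟩ := hne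
    have hne' : (SolS (derA A) (derβ A β) (derw A w) 0).Nonempty := ⟨Fin.init x₀, der_easy hx₀⟩
    obtain ⟨c', hc'pos, hIH⟩ := IH _ _ _ (derw_pos hw) hne' ε' hε'pos
    set c : ℝ := min c' (ε / (2 * (W + 1))) with hcdef
    have hcpos : 0 < c := lt_min hc'pos (by positivity)
    refine ⟨c, hcpos, ?_⟩
    intro x hx
    have hx' : Fin.init x ∈ SolS (derA A) (derβ A β) (derw A w) c := der_easy hx
    have hx'' : Fin.init x ∈ SolS (derA A) (derβ A β) (derw A w) c' :=
      SolS_mono (derw_pos hw) (min_le_left _ _) hx'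
    obtain ⟨y', hy', hclose⟩ := hIH _ hx''
    obtain ⟨yd, hmem, htag⟩ := lift_core hy' (x (Fin.last d))
    have hKε : K * ε' ≤ ε / 2 := by
      have h1 : ε' ≤ ε / (2 * (K + 1)) := min_le_right _ _
      have h2 : K * ε' ≤ K * (ε / (2 * (K + 1))) := by nlinarith
      have h3 : K * (ε / (2 * (K + 1))) ≤ ε / 2 := by
        rw [mul_comm, div_mul_eq_mul_div, div_le_div_iff₀ (by positivity) (by norm_num : (0:ℝ) < 2)]
        nlinarith
      linarith
    have hcW : c * W ≤ ε / 2 := by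
      have h1 : c ≤ ε / (2 * (W + 1)) := min_le_right _ _
      have h2 : c * W ≤ (ε / (2 * (W + 1))) * W := by nlinarith
      have h3 : (ε / (2 * (W + 1))) * W ≤ ε / 2 := by
        rw [div_mul_eq_mul_div, div_le_div_iff₀ (by positivity) (by norm_num)]
        nlinarith
      linarith
    have hlast : |x (Fin.last d) - yd| ≤ ε := by
      rcases htag with h | ⟨k, hk, hydeq, hξle⟩ | ⟨j, hj, hydeq, hydle⟩
      · rw [h]; simp; positivity
      · rw [abs_sub_comm, abs_of_nonneg (by linarith)]
        have hclose' : ∀ i, |y' i - Fin.init x i| ≤ ε' := fun i => by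
          rw [abs_sub_comm]; exact hclose i
        have h1 : loVal A β k y' - loVal A β k (Fin.init x)
            ≤ (∑ i, |A0 A k i|) / |A k (Fin.last d)| * ε' :=
          le_trans (le_abs_self _) (loVal_diff_le hk hclose')
        have h2 := loVal_le_row hx hk
        have h3 : (∑ i, |A0 A k i|) / |A k (Fin.last d)| * ε' ≤ K * ε' := by
          have := hKterm k (ne_of_lt hk)
          nlinarith
        have h4 : c * (w k / |A k (Fin.last d)|) ≤ c * W := by
          have := hWterm k (ne_of_lt hk)
          nlinarith
        rw [hydeq]
        linarith
      · rw [abs_of_nonneg (by linarith)]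
        have h1 : hiVal A β j (Fin.init x) - hiVal A β j y'
            ≤ (∑ i, |A0 A j i|) / |A j (Fin.last d)| * ε' := by
          have hd := hiVal_diff_le (β := β) hj (y := y') (z := Fin.init x)
            (fun i => by rw [abs_sub_comm]; exact hclose i)
          calc hiVal A β j (Fin.init x) - hiVal A β j y'
              ≤ |hiVal A β j (Fin.init x) - hiVal A β j y'| := le_abs_self _
            _ = |hiVal A β j y' - hiVal A β j (Fin.init x)| := abs_sub_comm _ _
            _ ≤ _ := hd
        have h2 := row_le_hiVal hx hj
        have h3 : (∑ i, |A0 A j i|) / |A j (Fin.last d)| * ε' ≤ K * ε' := by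
          have := hKterm j (ne_of_gt hj)
          nlinarith
        have h4 : c * (w j / |A j (Fin.last d)|) ≤ c * W := by
          have := hWterm j (ne_of_gt hj)
          nlinarith
        rw [hydeq]
        linarith
    refine ⟨Fin.snoc y' yd, hmem, ?_⟩
    intro i
    refine Fin.lastCases ?_ ?_ i
    · rw [Fin.snoc_last]
      exact hlast
    · intro i'
      rw [Fin.snoc_castSucc]
      exact le_trans (hclose i') hε'le

section Bayes
variable {Y U : Type*} [Fintype Y] (p : Y → ℝ) (LL : U → Y → ℝ)

lemma elloss_nonneg {v : Y → ℝ} (hp : ∀ y, 0 ≤ p y) (hv : ∀ y, 0 ≤ v y) : 0 ≤ elloss p v :=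
  Finset.sum_nonneg fun y _ => mul_nonneg (hp y) (hv y)

lemma bddBelow_elloss (hp : ∀ y, 0 ≤ p y) (hL : ∀ u y, 0 ≤ LL u y) :
    BddBelow (Set.range fun u => elloss p (LL u)) := by
  refine ⟨0, ?_⟩
  rintro _ ⟨u, rfl⟩
  exact elloss_nonneg p hp (hL u)

lemma bayesRisk_le (hp : ∀ y, 0 ≤ p y) (hL : ∀ u y, 0 ≤ LL u y) (u : U) :
    bayesRisk p LL ≤ elloss p (LL u) :=
  csInf_le (bddBelow_elloss p LL hp hL) ⟨u, rfl⟩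

lemma bayesRisk_eq_of_min {u : U} (h : Minimizes p LL u) :
    bayesRisk p LL = elloss p (LL u) := by
  refine IsLeast.csInf_eq ⟨⟨u, rfl⟩, ?_⟩
  rintro _ ⟨u', rfl⟩
  exact h u'
end Bayes

section Poly
variable {Y : Type*} [Fintype Y] {d : ℕ}
variable (L : (Fin d → ℝ) → Y → ℝ) (m : Y → ℕ)
variable (a : (y : Y) → Fin (m y + 1) → Fin d → ℝ) (b : (y : Y) → Fin (m y + 1) → ℝ)

/-- tuple type indexing the product-form affine pieces of `u ↦ ⟨p, L u⟩` -/
abbrev TT (m : Y → ℕ) : Type _ := (y : Y) → Fin (m y + 1)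

instance : Nonempty (TT m) := ⟨fun _ => 0⟩

def rowA (p : Y → ℝ) (τ : TT m) : Fin d → ℝ := fun j => ∑ y, p y * a y (τ y) j

def rowB (p : Y → ℝ) (τ : TT m) : ℝ := ∑ y, p y * b y (τ y)

lemma row_expand (p : Y → ℝ) (τ : TT m) (u : Fin d → ℝ) :
    (∑ j, rowA m a p τ j * u j) + rowB m b p τ
      = ∑ y, p y * ((∑ j, a y (τ y) j * u j) + b y (τ y)) := by
  simp only [mul_add, Finset.sum_add_distrib, rowB]
  congr 1
  simp only [rowA, Finset.sum_mul]
  rw [Finset.sum_comm]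
  refine Finset.sum_congr rfl fun y _ => ?_
  rw [Finset.mul_sum]
  exact Finset.sum_congr rfl fun j _ => by ring

lemma rows_le_elloss (hrep : ∀ y u, L u y = Finset.univ.sup' Finset.univ_nonempty
    (fun i => (∑ j, a y i j * u j) + b y i)) {p : Y → ℝ} (hp : ∀ y, 0 ≤ p y) (τ : TT m) (u : Fin d → ℝ) :
    (∑ j, rowA m a p τ j * u j) + rowB m b p τ ≤ elloss p (L u) := by
  rw [row_expand]
  refine Finset.sum_le_sum fun y _ => mul_le_mul_of_nonneg_left ?_ (hp y)
  rw [hrep y u]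
  exact Finset.le_sup' (fun i => (∑ j, a y i j * u j) + b y i) (Finset.mem_univ (τ y))

lemma exists_row_eq (hrep : ∀ y u, L u y = Finset.univ.sup' Finset.univ_nonempty
    (fun i => (∑ j, a y i j * u j) + b y i)) (p : Y → ℝ) (u : Fin d → ℝ) :
    ∃ τ : TT m, (∑ j, rowA m a p τ j * u j) + rowB m b p τ = elloss p (L u) := by
  have h : ∀ y : Y, ∃ i, L u y = (∑ j, a y i j * u j) + b y i := by
    intro y
    rw [hrep y u]
    obtain ⟨i, _, he⟩ := Finset.exists_mem_eq_sup' (Finset.univ_nonempty)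
      (fun i => (∑ j, a y i j * u j) + b y i)
    exact ⟨i, he⟩
  choose τ hτ using h
  refine ⟨τ, ?_⟩
  rw [row_expand]
  exact Finset.sum_congr rfl fun y _ => by rw [hτ y]

lemma minimizes_iff_rows (hrep : ∀ y u, L u y = Finset.univ.sup' Finset.univ_nonempty
    (fun i => (∑ j, a y i j * u j) + b y i)) {p : Y → ℝ} (hp : ∀ y, 0 ≤ p y) (hL0 : ∀ u y, 0 ≤ L u y)
    {u : Fin d → ℝ} :
    Minimizes p L u ↔ ∀ τ : TT m, (∑ j, rowA m a p τ j * u j) + rowB m b p τ ≤ bayesRisk p L := by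
  constructor
  · intro hmin τ
    calc (∑ j, rowA m a p τ j * u j) + rowB m b p τ ≤ elloss p (L u) :=
          rows_le_elloss L m a b hrep hp τ u
      _ = bayesRisk p L := (bayesRisk_eq_of_min p L hmin).symm
  · intro hrows u'
    obtain ⟨τ, hτ⟩ := exists_row_eq L m a b hrep p u
    calc elloss p (L u) = (∑ j, rowA m a p τ j * u j) + rowB m b p τ := hτ.symm
      _ ≤ bayesRisk p L := hrows τ
      _ ≤ elloss p (L u') := bayesRisk_le p L hp hL0 u'

/-! ### the lifted polyhedron and its faces -/

def rowP (jj : (y : Y) × Fin (m y + 1)) (x : (Fin d → ℝ) × (Y → ℝ)) : ℝ :=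
  (∑ j, a jj.1 jj.2 j * x.1 j) + b jj.1 jj.2 - x.2 jj.1

def PolyP : Set ((Fin d → ℝ) × (Y → ℝ)) := {x | ∀ jj, rowP m a b jj x ≤ 0}

def OptF (p : Y → ℝ) : Set ((Fin d → ℝ) × (Y → ℝ)) :=
  {x | x ∈ PolyP m a b ∧ ∀ z ∈ PolyP m a b, elloss p x.2 ≤ elloss p z.2}

def Sface (p : Y → ℝ) : Set ((y : Y) × Fin (m y + 1)) :=
  {jj | ∀ x ∈ OptF m a b p, rowP m a b jj x = 0}

def cmb (x z : (Fin d → ℝ) × (Y → ℝ)) (s : ℝ) : (Fin d → ℝ) × (Y → ℝ) :=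
  (fun i => x.1 i + s * (z.1 i - x.1 i), fun y => x.2 y + s * (z.2 y - x.2 y))

lemma rowP_cmb (jj : (y : Y) × Fin (m y + 1)) (x z : (Fin d → ℝ) × (Y → ℝ)) (s : ℝ) :
    rowP m a b jj (cmb x z s) = rowP m a b jj x + s * (rowP m a b jj z - rowP m a b jj x) := by
  simp only [rowP, cmb]
  have : ∀ j, a jj.1 jj.2 j * (x.1 j + s * (z.1 j - x.1 j))
      = a jj.1 jj.2 j * x.1 j + (s * (a jj.1 jj.2 j * z.1 j) - s * (a jj.1 jj.2 j * x.1 j)) := by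
    intro j; ring
  simp only [this, Finset.sum_add_distrib, Finset.sum_sub_distrib, ← Finset.mul_sum]
  ring

lemma elloss_cmb (p : Y → ℝ) (x z : (Fin d → ℝ) × (Y → ℝ)) (s : ℝ) :
    elloss p (cmb x z s).2 = elloss p x.2 + s * (elloss p z.2 - elloss p x.2) := by
  simp only [elloss, cmb]
  have : ∀ y, p y * (x.2 y + s * (z.2 y - x.2 y))
      = p y * x.2 y + (s * (p y * z.2 y) - s * (p y * x.2 y)) := by intro y; ring
  simp only [this, Finset.sum_add_distrib, Finset.sum_sub_distrib, ← Finset.mul_sum]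
  ring

lemma mem_P_lift (hrep : ∀ y u, L u y = Finset.univ.sup' Finset.univ_nonempty
    (fun i => (∑ j, a y i j * u j) + b y i)) (u : Fin d → ℝ) : (u, fun y => L u y) ∈ PolyP m a b := by
  intro jj
  rw [rowP]
  simp only
  rw [hrep jj.1 u]
  have := Finset.le_sup' (fun i => (∑ j, a jj.1 i j * u j) + b jj.1 i) (Finset.mem_univ jj.2)
  linarith

lemma L_le_snd (hrep : ∀ y u, L u y = Finset.univ.sup' Finset.univ_nonempty
    (fun i => (∑ j, a y i j * u j) + b y i)) {x : (Fin d → ℝ) × (Y → ℝ)} (hx : x ∈ PolyP m a b) (y : Y) :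
    L x.1 y ≤ x.2 y := by
  rw [hrep y x.1]
  apply Finset.sup'_le
  intro i _
  have := hx ⟨y, i⟩
  rw [rowP] at this
  simp only at this
  linarith

lemma elloss_mono {p : Y → ℝ} (hp : ∀ y, 0 ≤ p y) {v t : Y → ℝ} (h : ∀ y, v y ≤ t y) :
    elloss p v ≤ elloss p t :=
  Finset.sum_le_sum fun y _ => mul_le_mul_of_nonneg_left (h y) (hp y)

lemma minimizes_iff_opt (hrep : ∀ y u, L u y = Finset.univ.sup' Finset.univ_nonempty
    (fun i => (∑ j, a y i j * u j) + b y i)) {p : Y → ℝ} (hp : ∀ y, 0 ≤ p y) (u : Fin d → ℝ) :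
    Minimizes p L u ↔ (u, fun y => L u y) ∈ OptF m a b p := by
  constructor
  · intro hmin
    refine ⟨mem_P_lift L m a b hrep u, fun z hz => ?_⟩
    calc elloss p (fun y => L u y) = elloss p (L u) := rfl
      _ ≤ elloss p (L z.1) := hmin z.1
      _ ≤ elloss p z.2 := elloss_mono hp (L_le_snd L m a b hrep hz)
  · intro hopt u'
    exact hopt.2 (u', fun y => L u' y) (mem_P_lift L m a b hrep u')

lemma opt_minimizes (hrep : ∀ y u, L u y = Finset.univ.sup' Finset.univ_nonempty
    (fun i => (∑ j, a y i j * u j) + b y i)) {p : Y → ℝ} (hp : ∀ y, 0 ≤ p y) {x : (Fin d → ℝ) × (Y → ℝ)}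
    (hx : x ∈ OptF m a b p) : Minimizes p L x.1 := by
  intro u'
  calc elloss p (L x.1) ≤ elloss p x.2 := elloss_mono hp (L_le_snd L m a b hrep hx.1)
    _ ≤ elloss p (fun y => L u' y) := hx.2 _ (mem_P_lift L m a b hrep u')
    _ = elloss p (L u') := rfl

lemma relint_point (p : Y → ℝ) (hne : (OptF m a b p).Nonempty) :
    ∃ x ∈ OptF m a b p, ∀ jj, jj ∉ Sface m a b p → rowP m a b jj x < 0 := by
  suffices H : ∀ s : Finset ((y : Y) × Fin (m y + 1)),
      ∃ x ∈ OptF m a b p, ∀ jj ∈ s, jj ∉ Sface m a b p → rowP m a b jj x < 0 by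
    obtain ⟨x, hx, hs⟩ := H Finset.univ
    exact ⟨x, hx, fun jj hjj => hs jj (Finset.mem_univ jj) hjj⟩
  intro s
  induction s using Finset.induction_on with
  | empty =>
    obtain ⟨x, hx⟩ := hne
    exact ⟨x, hx, fun jj hjj => absurd hjj (Finset.notMem_empty jj)⟩
  | @insert jj s hjs IH =>
    obtain ⟨x, hx, hxs⟩ := IH
    by_cases hjjS : jj ∈ Sface m a b p
    · refine ⟨x, hx, fun j' hj' hj'S => ?_⟩
      rcases Finset.mem_insert.mp hj' with rfl | hj's
      · exact absurd hjjS hj'S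
      · exact hxs j' hj's hj'S
    · have : ∃ z ∈ OptF m a b p, rowP m a b jj z ≠ 0 := by
        by_contra hcon
        push_neg at hcon
        exact hjjS hcon
      obtain ⟨z, hz, hzne⟩ := this
      have hzlt : rowP m a b jj z < 0 := lt_of_le_of_ne (hz.1 jj) hzne
      refine ⟨cmb x z (1/2), ?_, ?_⟩
      · have hEzx : elloss p z.2 = elloss p x.2 :=
          le_antisymm (hz.2 x hx.1) (hx.2 z hz.1)
        refine ⟨?_, ?_⟩
        · intro j'
          rw [rowP_cmb]
          have h1 := hx.1 j'
          have h2 := hz.1 j'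
          linarith
        · intro w hw
          rw [elloss_cmb, hEzx]
          have := hx.2 w hw
          linarith
      · intro j' hj' hj'S
        rcases Finset.mem_insert.mp hj' with rfl | hj's
        · rw [rowP_cmb]
          have h1 := hx.1 j'
          linarith
        · rw [rowP_cmb]
          have h1 := hxs j' hj's hj'S
          have h2 := hz.1 j'
          linarith

lemma face_char (p : Y → ℝ) (hne : (OptF m a b p).Nonempty)
    {z : (Fin d → ℝ) × (Y → ℝ)} (hzP : z ∈ PolyP m a b)
    (hzS : ∀ jj ∈ Sface m a b p, rowP m a b jj z = 0) : z ∈ OptF m a b p := by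
  obtain ⟨x, hx, hstrict⟩ := relint_point m a b p hne
  set D : Finset ((y : Y) × Fin (m y + 1)) :=
    Finset.univ.filter (fun jj => jj ∉ Sface m a b p) with hD
  set s : ℝ := if hDne : D.Nonempty then
      D.inf' hDne (fun jj => (-rowP m a b jj x) / (1 + |rowP m a b jj z - rowP m a b jj x|))
    else 1 with hs
  have hspos : 0 < s := by
    rw [hs]
    split
    · rename_i hDne
      rw [Finset.lt_inf'_iff]
      intro jj hjj
      have hjD : jj ∉ Sface m a b p := by
        have := Finset.mem_filter.mp hjj
        exact this.2
      have hlt := hstrict jj hjD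
      have h1 : (0:ℝ) < -rowP m a b jj x := by linarith
      have h2 : (0:ℝ) < 1 + |rowP m a b jj z - rowP m a b jj x| := by positivity
      positivity
    · norm_num
  have hsle : ∀ jj ∈ D, s ≤ (-rowP m a b jj x) / (1 + |rowP m a b jj z - rowP m a b jj x|) := by
    intro jj hjj
    rw [hs, dif_pos ⟨jj, hjj⟩]
    exact Finset.inf'_le _ hjj
  have hmemP : ∀ t : ℝ, |t| ≤ s → cmb x z t ∈ PolyP m a b := by
    intro t ht jj
    rw [rowP_cmb]
    by_cases hjjS : jj ∈ Sface m a b p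
    · have h1 : rowP m a b jj x = 0 := hjjS x hx
      have h2 : rowP m a b jj z = 0 := hzS jj hjjS
      rw [h1, h2]
      simp
    · have hjD : jj ∈ D := Finset.mem_filter.mpr ⟨Finset.mem_univ jj, hjjS⟩
      have hrx := hstrict jj hjjS
      have hle := hsle jj hjD
      set Δ := rowP m a b jj z - rowP m a b jj x with hΔ
      have habs : t * Δ ≤ s * |Δ| := by
        calc t * Δ ≤ |t * Δ| := le_abs_self _
          _ = |t| * |Δ| := abs_mul t Δ
          _ ≤ s * |Δ| := mul_le_mul_of_nonneg_right ht (abs_nonneg Δ)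
      have hkey : s * |Δ| < -rowP m a b jj x := by
        have h1 : s * (1 + |Δ|) ≤ -rowP m a b jj x := by
          rw [← le_div_iff₀ (by positivity)]
          exact hle
        nlinarith [abs_nonneg Δ]
      linarith
  have hEz : elloss p z.2 = elloss p x.2 := by
    have h1 := hx.2 (cmb x z s) (hmemP s (by rw [abs_of_pos hspos]))
    have h2 := hx.2 (cmb x z (-s)) (hmemP (-s) (by rw [abs_neg, abs_of_pos hspos]))
    rw [elloss_cmb] at h1 h2
    nlinarith
  exact ⟨hzP, fun w hw => hEz ▸ hx.2 w hw⟩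

lemma Gamma_eq_face (hrep : ∀ y u, L u y = Finset.univ.sup' Finset.univ_nonempty
    (fun i => (∑ j, a y i j * u j) + b y i)) (p : Y → ℝ) (hp : ∀ y, 0 ≤ p y) (hne : (OptF m a b p).Nonempty) :
    {u | Minimizes p L u}
      = {u | ∀ jj ∈ Sface m a b p, rowP m a b jj (u, fun y => L u y) = 0} := by
  ext u
  simp only [Set.mem_setOf_eq]
  constructor
  · intro hmin jj hjj
    exact hjj _ ((minimizes_iff_opt L m a b hrep hp u).mp hmin)
  · intro htight
    have := face_char m a b p hne (mem_P_lift L m a b hrep u) htight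
    exact opt_minimizes L m a b hrep hp this

lemma Gamma_finite (hrep : ∀ y u, L u y = Finset.univ.sup' Finset.univ_nonempty
    (fun i => (∑ j, a y i j * u j) + b y i)) (hmin : ∀ p ∈ probSimplex Y, ∃ u, Minimizes p L u) :
    {G : Set (Fin d → ℝ) | ∃ p ∈ probSimplex Y, {u | Minimizes p L u} = G}.Finite := by
  have : {G : Set (Fin d → ℝ) | ∃ p ∈ probSimplex Y, {u | Minimizes p L u} = G} ⊆
      Set.range (fun S : Set ((y : Y) × Fin (m y + 1)) =>
        {u | ∀ jj ∈ S, rowP m a b jj (u, fun y => L u y) = 0}) := by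
    rintro G ⟨p, hp, rfl⟩
    refine ⟨Sface m a b p, ?_⟩
    obtain ⟨u0, hu0⟩ := hmin p hp
    exact (Gamma_eq_face L m a b hrep p hp.1
      ⟨_, (minimizes_iff_opt L m a b hrep hp.1 u0).mp hu0⟩).symm
  exact Set.Finite.subset (Set.finite_range _) this
end Poly

/-! ### Assembly: link construction and the main theorem -/

section Assembly
variable {Y : Type*} [Fintype Y] {d : ℕ}

/-- The set of minimizers of `u ↦ ⟨p, L u⟩`. -/
def GammaS (L : (Fin d → ℝ) → Y → ℝ) (p : Y → ℝ) : Set (Fin d → ℝ) := {u | Minimizes p L u}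

/-- `u` is within `η` (in sup-distance) of the set `G`. -/
def NearPt (η : ℝ) (u : Fin d → ℝ) (G : Set (Fin d → ℝ)) : Prop :=
  ∃ v ∈ G, ∀ j, |u j - v j| ≤ η

end Assembly

end

/-- A polyhedral loss that embeds a discrete loss `ℓ` admits a link `ψ` such
that for every `p` in the simplex there is `δ > 0` with
`⟨p, L u⟩ − inf ⟨p, L ·⟩ ≥ δ (⟨p, ℓ (ψ u)⟩ − min ⟨p, ℓ ·⟩)` for all `u`. -/
theorem polyhedral_embedding_surrogate_regret_bound
    {Y R : Type*} [Fintype Y] [Fintype R] [Nonempty R] {d : ℕ}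
    (L : (Fin d → ℝ) → Y → ℝ) (hL0 : ∀ u y, 0 ≤ L u y)
    (hpoly : ∀ y, IsPolyhedralFn (fun u => L u y))
    (ℓ : R → Y → ℝ) (hℓ0 : ∀ r y, 0 ≤ ℓ r y)
    (hembed : Embeds L ℓ) :
    ∃ ψ : (Fin d → ℝ) → R, ∀ p ∈ probSimplex Y, ∃ δ > 0, ∀ u : Fin d → ℝ,
      δ * (elloss p (ℓ (ψ u)) - bayesRisk p ℓ) ≤ elloss p (L u) - bayesRisk p L := by
  classical
  obtain ⟨φ, hφinj, hφL, hφiff⟩ := hembed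
  choose m a b hrep using hpoly
  -- a minimizer of the discrete loss exists for every `p`
  have hminℓex : ∀ p : Y → ℝ, ∃ r : R, Minimizes p ℓ r := by
    intro p
    obtain ⟨r0, _, h⟩ := Finset.exists_min_image Finset.univ (fun r => elloss p (ℓ r))
      Finset.univ_nonempty
    exact ⟨r0, fun r' => h r' (Finset.mem_univ r')⟩
  -- a minimizer of the surrogate exists for every `p` in the simplex
  have hminL : ∀ p ∈ probSimplex Y, ∃ u, Minimizes p L u := by
    intro p hp
    obtain ⟨r0, hr0⟩ := hminℓex p
    exact ⟨φ r0, (hφiff p hp r0).mp hr0⟩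
  -- the collection of minimizer sets is finite
  have hfin : {G : Set (Fin d → ℝ) | ∃ p ∈ probSimplex Y, GammaS L p = G}.Finite := by
    have := Gamma_finite L m a b hrep hminL
    convert this using 1
    rfl
  set 𝒢 : Finset (Set (Fin d → ℝ)) := hfin.toFinset with h𝒢def
  have h𝒢mem : ∀ G, G ∈ 𝒢 ↔ ∃ p ∈ probSimplex Y, GammaS L p = G := by
    intro G
    rw [h𝒢def, Set.Finite.mem_toFinset]
    rfl
  have h𝒢ex : ∀ G ∈ 𝒢, ∃ p, p ∈ probSimplex Y ∧ GammaS L p = G := by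
    intro G hG
    obtain ⟨p, hp, hpe⟩ := (h𝒢mem G).mp hG
    exact ⟨p, hp, hpe⟩
  choose! q hqΔ hqΓ using h𝒢ex
  -- minimizer sets as solution sets of linear systems
  have hΓsol : ∀ p ∈ probSimplex Y, ∀ w : TT m → ℝ,
      GammaS L p = SolS (rowA m a p) (fun τ => bayesRisk p L - rowB m b p τ) w 0 := by
    intro p hp w
    ext u
    have hiff := minimizes_iff_rows L m a b hrep hp.1 hL0 (u := u)
    constructor
    · intro hu τ
      have := hiff.mp hu τ
      simp only [zero_mul]
      linarith
    · intro hu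
      refine hiff.mpr fun τ => ?_
      have := hu τ
      simp only [zero_mul] at this
      linarith
  -- separation of "bad" (empty-intersection) subfamilies
  have hsep : ∀ 𝒥 : Finset (Set (Fin d → ℝ)), 𝒥 ⊆ 𝒢 → 𝒥.Nonempty →
      (⋂₀ (𝒥 : Set (Set (Fin d → ℝ))) = ∅) →
      ∃ η > 0, ∀ u, ∃ G ∈ 𝒥, ¬ NearPt η u G := by
    intro 𝒥 h𝒥sub h𝒥ne h𝒥empty
    by_contra hcon
    push_neg at hcon
    have hfeas : ∀ ε' : ℝ, 0 < ε' →
        (SolS (fun (Gτ : {G // G ∈ 𝒥} × TT m) => rowA m a (q Gτ.1.1) Gτ.2)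
          (fun Gτ => bayesRisk (q Gτ.1.1) L - rowB m b (q Gτ.1.1) Gτ.2)
          (fun Gτ => (∑ j, |rowA m a (q Gτ.1.1) Gτ.2 j|) + 1) ε').Nonempty := by
      intro ε' hε'
      obtain ⟨u, hu⟩ := hcon ε' hε'
      refine ⟨u, ?_⟩
      rintro ⟨⟨G, hG⟩, τ⟩
      obtain ⟨v, hvG, hvclose⟩ := hu G hG
      have hvΓ : v ∈ GammaS L (q G) := by
        rw [hqΓ G (h𝒥sub hG)]
        exact hvG
      have hvrow : ∑ i, rowA m a (q G) τ i * v i ≤ bayesRisk (q G) L - rowB m b (q G) τ := by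
        rw [hΓsol (q G) (hqΔ G (h𝒥sub hG)) (fun _ => (1:ℝ))] at hvΓ
        have := hvΓ τ
        simp only [zero_mul] at this
        linarith
      have hdiff : (∑ i, rowA m a (q G) τ i * u i) - ∑ i, rowA m a (q G) τ i * v i
          ≤ (∑ i, |rowA m a (q G) τ i|) * ε' :=
        le_trans (le_abs_self _) (sum_diff_bound hvclose)
      simp only
      nlinarith
    obtain ⟨u0, hu0⟩ := Emain d _ _ _ (fun Gτ => by positivity) hfeas
    have hmem : ∀ G ∈ 𝒥, u0 ∈ G := by
      intro G hG
      rw [← hqΓ G (h𝒥sub hG), hΓsol (q G) (hqΔ G (h𝒥sub hG)) (fun _ => (1:ℝ))]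
      intro τ
      have := hu0 ⟨⟨G, hG⟩, τ⟩
      simp only [zero_mul] at this ⊢
      linarith
    have : u0 ∈ ⋂₀ (𝒥 : Set (Set (Fin d → ℝ))) := by
      rw [Set.mem_sInter]
      intro G hG
      exact hmem G hG
    rw [h𝒥empty] at this
    exact this
  -- global ε
  set Bad : Finset (Finset (Set (Fin d → ℝ))) := 𝒢.powerset.filter
    (fun 𝒥 => 𝒥.Nonempty ∧ ⋂₀ (𝒥 : Set (Set (Fin d → ℝ))) = ∅) with hBaddef
  have hBadsep : ∀ 𝒥 ∈ Bad, ∃ η, 0 < η ∧ ∀ u, ∃ G ∈ 𝒥, ¬ NearPt η u G := by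
    intro 𝒥 h𝒥
    rw [hBaddef, Finset.mem_filter, Finset.mem_powerset] at h𝒥
    obtain ⟨η, hη1, hη2⟩ := hsep 𝒥 h𝒥.1 h𝒥.2.1 h𝒥.2.2
    exact ⟨η, hη1, hη2⟩
  choose! η hηpos hηspec using hBadsep
  set ε : ℝ := if hB : Bad.Nonempty then min (Bad.inf' hB η) 1 else 1 with hεdef
  have hεpos : 0 < ε := by
    rw [hεdef]
    split
    · refine lt_min ?_ one_pos
      rw [Finset.lt_inf'_iff]
      intro 𝒥 h𝒥
      exact hηpos 𝒥 h𝒥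
    · norm_num
  have hεle : ∀ 𝒥 ∈ Bad, ε ≤ η 𝒥 := by
    intro 𝒥 h𝒥
    rw [hεdef, dif_pos ⟨𝒥, h𝒥⟩]
    exact le_trans (min_le_left _ _) (Finset.inf'_le _ h𝒥)
  -- the link exists
  have hψ : ∀ u, ∃ r : R, ∀ G ∈ 𝒢, NearPt ε u G → φ r ∈ G := by
    intro u
    set 𝒥u : Finset (Set (Fin d → ℝ)) := 𝒢.filter (fun G => NearPt ε u G) with h𝒥udef
    by_cases h𝒥ne : 𝒥u.Nonempty
    · -- the members of 𝒥u have a common point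
      have hint : (⋂₀ (𝒥u : Set (Set (Fin d → ℝ)))).Nonempty := by
        by_contra hconi
        rw [Set.not_nonempty_iff_eq_empty] at hconi
        have h𝒥uBad : 𝒥u ∈ Bad := by
          rw [hBaddef, Finset.mem_filter, Finset.mem_powerset]
          exact ⟨Finset.filter_subset _ _, h𝒥ne, hconi⟩
        obtain ⟨G, hG𝒥u, hnotNear⟩ := hηspec 𝒥u h𝒥uBad u
        have hNear : NearPt ε u G := (Finset.mem_filter.mp hG𝒥u).2
        obtain ⟨v, hv, hvc⟩ := hNear
        exact hnotNear ⟨v, hv, fun j => le_trans (hvc j) (hεle 𝒥u h𝒥uBad)⟩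
      obtain ⟨xbar, hxbar⟩ := hint
      -- average the representing distributions
      have hk : (0:ℝ) < (𝒥u.card : ℝ) := by
        exact_mod_cast Finset.card_pos.mpr h𝒥ne
      set pbar : Y → ℝ := fun y => (∑ G ∈ 𝒥u.attach, q G.1 y) / (𝒥u.card : ℝ) with hpbardef
      have hqΔ' : ∀ G : {G // G ∈ 𝒥u}, q G.1 ∈ probSimplex Y :=
        fun G => hqΔ G.1 (Finset.filter_subset _ _ G.2)
      have hpbarΔ : pbar ∈ probSimplex Y := by
        constructor
        · intro y
          exact div_nonneg (Finset.sum_nonneg fun G _ => (hqΔ' G).1 y) hk.le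
        · rw [hpbardef]
          simp only
          rw [← Finset.sum_div, Finset.sum_comm]
          have : ∀ G ∈ 𝒥u.attach, ∑ y, q G.1 y = 1 := fun G _ => (hqΔ' G).2
          rw [Finset.sum_congr rfl this, Finset.sum_const, Finset.card_attach, nsmul_eq_mul,
            mul_one, div_self (ne_of_gt hk)]
      obtain ⟨rbar, hrbarmin⟩ := hminℓex pbar
      have hrbarL : Minimizes pbar L (φ rbar) := (hφiff pbar hpbarΔ rbar).mp hrbarmin
      have hdecomp : ∀ t : (Fin d → ℝ),
          elloss pbar (L t) = (∑ G ∈ 𝒥u.attach, elloss (q G.1) (L t)) / (𝒥u.card : ℝ) := by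
        intro t
        rw [elloss, hpbardef]
        simp only
        simp only [div_mul_eq_mul_div]
        rw [← Finset.sum_div]
        congr 1
        simp only [Finset.sum_mul]
        rw [Finset.sum_comm]
        rfl
      have hsum_le : ∑ G ∈ 𝒥u.attach, elloss (q G.1) (L (φ rbar))
          ≤ ∑ G ∈ 𝒥u.attach, elloss (q G.1) (L xbar) := by
        have h1 := hrbarL xbar
        rw [hdecomp (φ rbar), hdecomp xbar] at h1
        have h2 := mul_le_mul_of_nonneg_right h1 hk.le
        rw [div_mul_cancel₀ _ (ne_of_gt hk), div_mul_cancel₀ _ (ne_of_gt hk)] at h2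
        exact h2
      have hxmin : ∀ G' : {G // G ∈ 𝒥u}, Minimizes (q G'.1) L xbar := by
        intro G'
        have hx : xbar ∈ GammaS L (q G'.1) := by
          rw [hqΓ G'.1 (Finset.filter_subset _ _ G'.2)]
          exact (Set.mem_sInter.mp hxbar) G'.1 (Finset.mem_coe.mpr G'.2)
        exact hx
      have heq : ∀ G' ∈ 𝒥u.attach, elloss (q G'.1) (L xbar) = elloss (q G'.1) (L (φ rbar)) := by
        by_contra hcon2
        push_neg at hcon2
        obtain ⟨G', hG', hne'⟩ := hcon2
        have hslt : (∑ G ∈ 𝒥u.attach, elloss (q G.1) (L xbar))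
            < ∑ G ∈ 𝒥u.attach, elloss (q G.1) (L (φ rbar)) :=
          Finset.sum_lt_sum (fun G _ => hxmin G (φ rbar))
            ⟨G', hG', lt_of_le_of_ne (hxmin G' (φ rbar)) hne'⟩
        linarith
      refine ⟨rbar, fun G hG hNear => ?_⟩
      have hG𝒥u : G ∈ 𝒥u := Finset.mem_filter.mpr ⟨hG, hNear⟩
      have hminqG : Minimizes (q G) L (φ rbar) := by
        intro v
        have he := heq ⟨G, hG𝒥u⟩ (Finset.mem_attach _ _)
        calc elloss (q G) (L (φ rbar)) = elloss (q G) (L xbar) := he.symm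
          _ ≤ elloss (q G) (L v) := hxmin ⟨G, hG𝒥u⟩ v
      rw [← hqΓ G hG]
      exact hminqG
    · refine ⟨Classical.arbitrary R, fun G hG hNear => ?_⟩
      exact absurd (Finset.mem_filter.mpr ⟨hG, hNear⟩) (fun hm => h𝒥ne ⟨G, hm⟩)
  choose ψ hψspec using hψ
  refine ⟨ψ, ?_⟩
  intro p hp
  have hΓp𝒢 : GammaS L p ∈ 𝒢 := (h𝒢mem _).mpr ⟨p, hp, rfl⟩
  have hΓpsol := hΓsol p hp (fun _ => (1:ℝ))
  have hΓpne : (SolS (rowA m a p) (fun τ => bayesRisk p L - rowB m b p τ)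
      (fun _ => (1:ℝ)) 0).Nonempty := by
    obtain ⟨u0, hu0⟩ := hminL p hp
    have hu0' : u0 ∈ GammaS L p := hu0
    rw [hΓpsol] at hu0'
    exact ⟨u0, hu0'⟩
  obtain ⟨c, hcpos, hc⟩ := Fmain d (rowA m a p) (fun τ => bayesRisk p L - rowB m b p τ)
    (fun _ => (1:ℝ)) (fun _ => one_pos) hΓpne ε hεpos
  obtain ⟨r0, hr0min⟩ := hminℓex p
  have hBℓ : bayesRisk p ℓ = elloss p (ℓ r0) := bayesRisk_eq_of_min p ℓ hr0min
  have hM : ∀ r : R, elloss p (ℓ r)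
      ≤ Finset.univ.sup' Finset.univ_nonempty (fun r => elloss p (ℓ r)) :=
    fun r => Finset.le_sup' (fun r => elloss p (ℓ r)) (Finset.mem_univ r)
  set M : ℝ := Finset.univ.sup' Finset.univ_nonempty (fun r => elloss p (ℓ r)) with hMdef
  have hMD : 0 ≤ M - bayesRisk p ℓ := by
    rw [hBℓ]; linarith [hM r0]
  set δ : ℝ := c / (M - bayesRisk p ℓ + 1) with hδdef
  have hδpos : 0 < δ := div_pos hcpos (by linarith)
  refine ⟨δ, hδpos, ?_⟩
  intro u
  by_cases hcase : elloss p (L u) ≤ bayesRisk p L + c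
  · have huSol : u ∈ SolS (rowA m a p) (fun τ => bayesRisk p L - rowB m b p τ)
        (fun _ => (1:ℝ)) c := by
      intro τ
      have := rows_le_elloss L m a b hrep hp.1 τ u
      simp only [mul_one]
      linarith
    obtain ⟨v, hv0, hvclose⟩ := hc u huSol
    have hvΓ : v ∈ GammaS L p := by rw [hΓpsol]; exact hv0
    have hNear : NearPt ε u (GammaS L p) := ⟨v, hvΓ, hvclose⟩
    have hφψ : φ (ψ u) ∈ GammaS L p := hψspec u (GammaS L p) hΓp𝒢 hNear
    have hψmin : Minimizes p ℓ (ψ u) := (hφiff p hp (ψ u)).mpr hφψ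
    have h1 : elloss p (ℓ (ψ u)) = bayesRisk p ℓ := (bayesRisk_eq_of_min p ℓ hψmin).symm
    rw [h1, sub_self, mul_zero]
    have := bayesRisk_le p L hp.1 hL0 u
    linarith
  · push_neg at hcase
    have hup : elloss p (ℓ (ψ u)) ≤ M := hM (ψ u)
    have hlow : bayesRisk p ℓ ≤ elloss p (ℓ (ψ u)) := bayesRisk_le p ℓ hp.1 hℓ0 (ψ u)
    have hkey : δ * (elloss p (ℓ (ψ u)) - bayesRisk p ℓ) ≤ c := by
      have h2 : δ * (elloss p (ℓ (ψ u)) - bayesRisk p ℓ) ≤ δ * (M - bayesRisk p ℓ) :=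
        mul_le_mul_of_nonneg_left (by linarith) hδpos.le
      have h3 : δ * (M - bayesRisk p ℓ) ≤ c := by
        rw [hδdef, div_mul_eq_mul_div, div_le_iff₀ (by linarith)]
        nlinarith
      linarith
    linarith
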